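/- Suppose 1 < q < 2 and b ≥ q−1, or q = 2 and b > 1. Then ψ(k) := 1 + b·k^q − k^{2q−2} − b·k^{q−2} < 0 for all k ∈ (0,1). Consequently, the nonlinearity f(r,z₁,z₂) = −z₁ + z₁^{2q−1} + b·z₁^{q−1}·z₂^q satisfies f(r,z₁,z₂)·z₂ < f(r,z₂,z₁)·z₁ for all z₁ > z₂ > 0 and all r > 0. -/

import Mathlib

open Real Set

-- Bernoulli step: 2 k^q - q k^2 + (q-2) < 0 for k ∈ (0,1), 1 < q < 2
lemma aux_h (q : ℝ) (hq1 : 1 < q) (hq2 : q < 2) {k : ℝ} (hk0 : 0 < k) (hk1 : k < 1) :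
    2 * k ^ q - q * (k * k) + (q - 2) < 0 := by
  have hs : (-1 : ℝ) ≤ k * k - 1 := by nlinarith
  have hs' : k * k - 1 ≠ 0 := by nlinarith
  have hp1 : 0 < q / 2 := by linarith
  have hp2 : q / 2 < 1 := by linarith
  have hB := rpow_one_add_lt_one_add_mul_self hs hs' hp1 hp2
  have h1 : (1 + (k * k - 1)) ^ (q / 2) = k ^ q := by
    have : (1 : ℝ) + (k * k - 1) = k * k := by ring
    rw [this, Real.mul_rpow hk0.le hk0.le, ← Real.rpow_add hk0]
    norm_num
  rw [h1] at hB
  nlinarith [hB]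

lemma aux_g (q : ℝ) (hq1 : 1 < q) (hq2 : q < 2) {k : ℝ} (hk0 : 0 < k) (hk1 : k < 1) :
    1 - k ^ (2 * q - 2) < (q - 1) * (k ^ (q - 2) - k ^ q) := by
  set g : ℝ → ℝ := fun x => (q - 1) * (x ^ (q - 2) - x ^ q) - (1 - x ^ (2 * q - 2)) with hg
  have hderiv : ∀ x, 0 < x → HasDerivAt g
      ((q - 1) * ((q - 2) * x ^ (q - 3) - q * x ^ (q - 1)) + (2 * q - 2) * x ^ (2 * q - 3)) x := by
    intro x hx0
    have h1 : HasDerivAt (fun y : ℝ => y ^ (q - 2)) ((q - 2) * x ^ (q - 3)) x := by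
      have := Real.hasDerivAt_rpow_const (x := x) (p := q - 2) (Or.inl hx0.ne')
      convert this using 2
      ring_nf
    have h2 : HasDerivAt (fun y : ℝ => y ^ q) (q * x ^ (q - 1)) x :=
      Real.hasDerivAt_rpow_const (x := x) (p := q) (Or.inl hx0.ne')
    have h3 : HasDerivAt (fun y : ℝ => y ^ (2 * q - 2)) ((2 * q - 2) * x ^ (2 * q - 3)) x := by
      have := Real.hasDerivAt_rpow_const (x := x) (p := 2 * q - 2) (Or.inl hx0.ne')
      convert this using 2
      ring_nf
    have := (((h1.sub h2).const_mul (q - 1)).sub ((hasDerivAt_const x (1 : ℝ)).sub h3))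
    exact this.congr_deriv (by ring)
  have hcont : ContinuousOn g (Set.Ioc (0 : ℝ) 1) := by
    intro x hx
    have hx0 : x ≠ 0 := ne_of_gt hx.1
    have c1 := Real.continuousAt_rpow_const x (q - 2) (Or.inl hx0)
    have c2 := Real.continuousAt_rpow_const x q (Or.inl hx0)
    have c3 := Real.continuousAt_rpow_const x (2 * q - 2) (Or.inl hx0)
    exact ((continuousAt_const.mul (c1.sub c2)).sub (continuousAt_const.sub c3)).continuousWithinAt
  have hanti : StrictAntiOn g (Set.Ioc (0 : ℝ) 1) := by
    apply strictAntiOn_of_deriv_neg (convex_Ioc 0 1) hcont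
    intro x hx
    rw [interior_Ioc] at hx
    rw [(hderiv x hx.1).deriv]
    have hpos : 0 < (q - 1) * x ^ (q - 3) := by
      have := Real.rpow_pos_of_pos hx.1 (q - 3)
      nlinarith
    have hneg := aux_h q hq1 hq2 hx.1 hx.2
    have hid : (q - 1) * ((q - 2) * x ^ (q - 3) - q * x ^ (q - 1)) + (2 * q - 2) * x ^ (2 * q - 3)
        = ((q - 1) * x ^ (q - 3)) * (2 * x ^ q - q * (x * x) + (q - 2)) := by
      have e1 : x ^ (q - 3) * x ^ q = x ^ (2 * q - 3) := by
        rw [← Real.rpow_add hx.1]; ring_nf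
      have e2 : x ^ (q - 3) * (x * x) = x ^ (q - 1) := by
        rw [show (x * x) = x ^ (1:ℝ) * x ^ (1:ℝ) by rw [Real.rpow_one],
          ← Real.rpow_add hx.1, ← Real.rpow_add hx.1]
        ring_nf
      linear_combination (-2 * (q - 1)) * e1 + (q * (q - 1)) * e2
    rw [hid]
    exact mul_neg_of_pos_of_neg hpos hneg
  have h10 : g 1 = 0 := by
    simp [hg, Real.one_rpow]
  have := hanti ⟨hk0, hk1.le⟩ ⟨one_pos, le_refl 1⟩ hk1
  rw [h10] at this
  simp only [hg] at this
  linarith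

/-- If `1 < q < 2, b ≥ q-1` or `q = 2, b > 1` then
`ψ(k) = 1 + b k^q − k^{2q−2} − b k^{q−2} < 0` on `(0,1)`; consequently the
nonlinearity `f(r,z₁,z₂) = -z₁ + z₁^{2q-1} + b z₁^{q-1} z₂^q` satisfies
`f(r,z₁,z₂) z₂ < f(r,z₂,z₁) z₁` for all `z₁ > z₂ > 0` and `r > 0`. -/
theorem psi_negative (q b : ℝ)
    (h : (1 < q ∧ q < 2 ∧ q - 1 ≤ b) ∨ (q = 2 ∧ 1 < b)) :
    (∀ k ∈ Set.Ioo (0:ℝ) 1,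
      1 + b * k ^ q - k ^ (2 * q - 2) - b * k ^ (q - 2) < 0) ∧
    (∀ r > (0:ℝ), ∀ z₁ z₂ : ℝ, 0 < z₂ → z₂ < z₁ →
      (-z₁ + z₁ ^ (2 * q - 1) + b * z₁ ^ (q - 1) * z₂ ^ q) * z₂ <
      (-z₂ + z₂ ^ (2 * q - 1) + b * z₂ ^ (q - 1) * z₁ ^ q) * z₁) := by
  have part1 : ∀ k ∈ Set.Ioo (0:ℝ) 1,
      1 + b * k ^ q - k ^ (2 * q - 2) - b * k ^ (q - 2) < 0 := by
    rintro k ⟨hk0, hk1⟩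
    rcases h with ⟨hq1, hq2, hb⟩ | ⟨hq, hb⟩
    · have hgk := aux_g q hq1 hq2 hk0 hk1
      have hd : k ^ q < k ^ (q - 2) :=
        Real.rpow_lt_rpow_of_exponent_gt hk0 hk1 (by linarith)
      have hb' : (q - 1) * (k ^ (q - 2) - k ^ q) ≤ b * (k ^ (q - 2) - k ^ q) :=
        mul_le_mul_of_nonneg_right hb (by linarith)
      nlinarith [hgk, hb']
    · subst hq
      norm_num
      have hk2 : k ^ 2 < 1 := by nlinarith
      nlinarith [mul_pos (sub_pos.mpr hb) (sub_pos.mpr hk2)]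
  refine ⟨part1, ?_⟩
  intro r _ z₁ z₂ hz2 hlt
  have hz1 : 0 < z₁ := hz2.trans hlt
  have hk0 : 0 < z₂ / z₁ := div_pos hz2 hz1
  have hk1 : z₂ / z₁ < 1 := (div_lt_one hz1).mpr hlt
  have hψ := part1 (z₂ / z₁) ⟨hk0, hk1⟩
  have E : ∀ z : ℝ, 0 < z → z ^ (2 * q - 1) = z ^ q * z ^ q / z ∧
      z ^ (q - 1) = z ^ q / z ∧ z ^ (q - 2) = z ^ q / (z * z) ∧
      z ^ (2 * q - 2) = z ^ q * z ^ q / (z * z) ∧ z ^ (2 * q) = z ^ q * z ^ q := by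
    intro z hz
    have h2q : z ^ (2 * q) = z ^ q * z ^ q := by
      rw [← Real.rpow_add hz]; ring_nf
    have hz2' : z ^ (2:ℝ) = z * z := by
      rw [show (2:ℝ) = (1:ℝ) + 1 by norm_num, Real.rpow_add hz, Real.rpow_one]
    refine ⟨?_, ?_, ?_, ?_, h2q⟩
    · rw [Real.rpow_sub hz, Real.rpow_one, h2q]
    · rw [Real.rpow_sub hz, Real.rpow_one]
    · rw [Real.rpow_sub hz, hz2']
    · rw [Real.rpow_sub hz, hz2', h2q]
  obtain ⟨e1, e2, -, -, e5⟩ := E z₁ hz1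
  obtain ⟨f1, f2, -, -, -⟩ := E z₂ hz2
  have key : (-z₁ + z₁ ^ (2 * q - 1) + b * z₁ ^ (q - 1) * z₂ ^ q) * z₂ -
      (-z₂ + z₂ ^ (2 * q - 1) + b * z₂ ^ (q - 1) * z₁ ^ q) * z₁ =
      z₁ ^ (2 * q) * (z₂ / z₁) *
        (1 + b * (z₂ / z₁) ^ q - (z₂ / z₁) ^ (2 * q - 2) - b * (z₂ / z₁) ^ (q - 2)) := by
    rw [Real.div_rpow hz2.le hz1.le, Real.div_rpow hz2.le hz1.le,
      Real.div_rpow hz2.le hz1.le]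
    obtain ⟨-, -, g3, g4, -⟩ := E z₁ hz1
    obtain ⟨-, -, g3', g4', -⟩ := E z₂ hz2
    rw [e1, e2, f1, f2, e5, g3, g4, g3', g4']
    have hA : z₁ ^ q ≠ 0 := (Real.rpow_pos_of_pos hz1 q).ne'
    field_simp
    ring
  have hpos : 0 < z₁ ^ (2 * q) * (z₂ / z₁) :=
    mul_pos (Real.rpow_pos_of_pos hz1 _) hk0
  nlinarith [mul_neg_of_pos_of_neg hpos hψ, key]
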